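/- Let N ≥ 2, α, β > 0 with αβ > N², and let T = T₁ ∘ T₂ with T₁(v)(t) = ∫_t^1 (∫_0^s N τ^{N-1} v(τ)^α dτ)^{1/N} ds and T₂ defined with exponent β. Let K = {v ∈ C[0,1] : v ≥ 0, min_{[1/4,3/4]} v ≥ (1/4)‖v‖}. Then there exist constants Γ₁ > 0 (depending on N, α, β) such that ‖T(v)‖ ≥ Γ₁ ‖v‖^{αβ/N²} for all v ∈ K, and ‖T(v)‖ ≤ ‖v‖^{αβ/N²} for all v ∈ K. In particular, for 0 < r₁ < 1 one has ‖T(v)‖ < ‖v‖ on {v ∈ K : ‖v‖ = r₁}, and for r₂ sufficiently large one has ‖T(v)‖ > ‖v‖ on {v ∈ K : ‖v‖ = r₂}. -/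

import Mathlib

open Set

/-- Supremum norm on `C[0,1]`. -/
noncomputable def supNorm (v : ℝ → ℝ) : ℝ :=
  sSup ((fun t => |v t|) '' Icc (0:ℝ) 1)

/-- Membership in the cone `K ⊂ C[0,1]`. -/
def memK (v : ℝ → ℝ) : Prop :=
  ContinuousOn v (Icc (0:ℝ) 1) ∧ (∀ t ∈ Icc (0:ℝ) 1, 0 ≤ v t) ∧
    ∀ t ∈ Icc (1/4 : ℝ) (3/4), (1/4) * supNorm v ≤ v t

/-- The solution operator with exponent `γ`. -/
noncomputable def MAop (N : ℕ) (γ : ℝ) (v : ℝ → ℝ) : ℝ → ℝ :=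
  fun t => ∫ s in t..(1:ℝ),
    (∫ τ in (0:ℝ)..s, (N:ℝ) * τ ^ (N - 1) * v τ ^ γ) ^ ((N:ℝ)⁻¹)

section Aux

variable {N : ℕ} {γ : ℝ} {w : ℝ → ℝ}

private lemma ii_sub {f : ℝ → ℝ} (hf : ContinuousOn f (Icc 0 1)) {a b : ℝ}
    (ha : 0 ≤ a) (hab : a ≤ b) (hb : b ≤ 1) :
    IntervalIntegrable f MeasureTheory.volume a b :=
  (hf.mono (by rw [uIcc_of_le hab]; exact Icc_subset_Icc ha hb)).intervalIntegrable

private lemma g_cont (hγ : 0 < γ) (hwc : ContinuousOn w (Icc 0 1)) :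
    ContinuousOn (fun τ : ℝ => (N:ℝ) * τ ^ (N - 1) * w τ ^ γ) (Icc 0 1) :=
  (continuousOn_const.mul ((continuous_pow _).continuousOn)).mul
    (hwc.rpow_const (fun x _ => Or.inr hγ.le))

private lemma g_nonneg (hw0 : ∀ t ∈ Icc (0:ℝ) 1, 0 ≤ w t) {τ : ℝ}
    (hτ : τ ∈ Icc (0:ℝ) 1) : 0 ≤ (N:ℝ) * τ ^ (N - 1) * w τ ^ γ := by
  have h1 : (0:ℝ) ≤ w τ := hw0 τ hτ
  have := hτ.1
  positivity

private lemma int_pow_mul (hN : 1 ≤ N) (c a b : ℝ) :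
    ∫ τ in a..b, (N:ℝ) * τ ^ (N - 1) * c = c * (b ^ N - a ^ N) := by
  have h : (fun τ : ℝ => (N:ℝ) * τ ^ (N - 1) * c) = fun τ : ℝ => ((N:ℝ) * c) * τ ^ (N - 1) := by
    ext τ; ring
  rw [h, intervalIntegral.integral_const_mul, integral_pow]
  have h1 : N - 1 + 1 = N := Nat.succ_pred_eq_of_pos hN
  rw [h1]
  have hN0 : (N:ℝ) ≠ 0 := Nat.cast_ne_zero.mpr (by omega)
  field_simp
  rw [Nat.cast_sub hN, Nat.cast_one]
  ring

/-- Nonnegativity of the inner integral. -/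
private lemma Inn_nonneg (hw0 : ∀ t ∈ Icc (0:ℝ) 1, 0 ≤ w t) {s : ℝ}
    (hs : s ∈ Icc (0:ℝ) 1) :
    0 ≤ ∫ τ in (0:ℝ)..s, (N:ℝ) * τ ^ (N - 1) * w τ ^ γ := by
  refine intervalIntegral.integral_nonneg hs.1 (fun u hu => ?_)
  exact g_nonneg hw0 ⟨hu.1, le_trans hu.2 hs.2⟩

/-- Upper bound for the inner integral. -/
private lemma Inn_le (hN : 1 ≤ N) (hγ : 0 < γ) (hwc : ContinuousOn w (Icc 0 1))
    (hw0 : ∀ t ∈ Icc (0:ℝ) 1, 0 ≤ w t) {M : ℝ} (hM0 : 0 ≤ M)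
    (hM : ∀ t ∈ Icc (0:ℝ) 1, w t ≤ M) {s : ℝ} (hs : s ∈ Icc (0:ℝ) 1) :
    (∫ τ in (0:ℝ)..s, (N:ℝ) * τ ^ (N - 1) * w τ ^ γ) ≤ M ^ γ := by
  have h1 : (∫ τ in (0:ℝ)..s, (N:ℝ) * τ ^ (N - 1) * w τ ^ γ)
      ≤ ∫ τ in (0:ℝ)..s, (N:ℝ) * τ ^ (N - 1) * M ^ γ := by
    refine intervalIntegral.integral_mono_on hs.1
      (ii_sub (g_cont hγ hwc) le_rfl hs.1 hs.2)
      ((by fun_prop : Continuous (fun τ : ℝ => (N:ℝ) * τ ^ (N - 1) * M ^ γ)).intervalIntegrable _ _)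
      (fun x hx => ?_)
    have hx1 : x ∈ Icc (0:ℝ) 1 := ⟨hx.1, le_trans hx.2 hs.2⟩
    have h2 : w x ^ γ ≤ M ^ γ := Real.rpow_le_rpow (hw0 x hx1) (hM x hx1) hγ.le
    have h3 : (0:ℝ) ≤ (N:ℝ) * x ^ (N - 1) := by
      have := hx.1; positivity
    exact mul_le_mul_of_nonneg_left h2 h3
  rw [int_pow_mul hN, zero_pow (by omega : N ≠ 0)] at h1
  have h4 : s ^ N ≤ 1 := pow_le_one₀ hs.1 hs.2
  have h5 : (0:ℝ) ≤ M ^ γ := Real.rpow_nonneg hM0 γ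
  nlinarith [h1]

/-- Continuity of the integrand of the outer integral. -/
private lemma F_cont (hγ : 0 < γ) (hwc : ContinuousOn w (Icc 0 1)) :
    ContinuousOn
      (fun s : ℝ => (∫ τ in (0:ℝ)..s, (N:ℝ) * τ ^ (N - 1) * w τ ^ γ) ^ ((N:ℝ)⁻¹))
      (Icc (0:ℝ) 1) := by
  have hInt : MeasureTheory.IntegrableOn
      (fun τ : ℝ => (N:ℝ) * τ ^ (N - 1) * w τ ^ γ) (uIcc (0:ℝ) 1) := by
    rw [uIcc_of_le (zero_le_one)]
    exact (g_cont hγ hwc).integrableOn_Icc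
  have hG : ContinuousOn
      (fun s : ℝ => ∫ τ in (0:ℝ)..s, (N:ℝ) * τ ^ (N - 1) * w τ ^ γ) (Icc (0:ℝ) 1) := by
    have := intervalIntegral.continuousOn_primitive_interval hInt
    rwa [uIcc_of_le (zero_le_one : (0:ℝ) ≤ 1)] at this
  exact hG.rpow_const (fun x _ => Or.inr (by positivity))

/-- Continuity of the operator. -/
private lemma MAop_cont (hγ : 0 < γ) (hwc : ContinuousOn w (Icc 0 1)) :
    ContinuousOn (MAop N γ w) (Icc (0:ℝ) 1) := by
  have hInt : MeasureTheory.IntegrableOn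
      (fun s : ℝ => (∫ τ in (0:ℝ)..s, (N:ℝ) * τ ^ (N - 1) * w τ ^ γ) ^ ((N:ℝ)⁻¹))
      (uIcc (0:ℝ) 1) := by
    rw [uIcc_of_le (zero_le_one)]
    exact (F_cont hγ hwc).integrableOn_Icc
  have := intervalIntegral.continuousOn_primitive_interval_left hInt
  rwa [uIcc_of_le (zero_le_one : (0:ℝ) ≤ 1)] at this

/-- Upper bound for the operator. -/
private lemma MAop_upper (hN : 1 ≤ N) (hγ : 0 < γ) (hwc : ContinuousOn w (Icc 0 1))
    (hw0 : ∀ t ∈ Icc (0:ℝ) 1, 0 ≤ w t) {M : ℝ} (hM0 : 0 ≤ M)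
    (hM : ∀ t ∈ Icc (0:ℝ) 1, w t ≤ M) :
    ∀ t ∈ Icc (0:ℝ) 1, 0 ≤ MAop N γ w t ∧ MAop N γ w t ≤ M ^ (γ / N) := by
  intro t ht
  have hN0 : (N:ℝ) ≠ 0 := Nat.cast_ne_zero.mpr (by omega)
  have hFnn : ∀ s ∈ Icc (0:ℝ) 1,
      0 ≤ (∫ τ in (0:ℝ)..s, (N:ℝ) * τ ^ (N - 1) * w τ ^ γ) ^ ((N:ℝ)⁻¹) :=
    fun s hs => Real.rpow_nonneg (Inn_nonneg hw0 hs) _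
  have hFle : ∀ s ∈ Icc (0:ℝ) 1,
      (∫ τ in (0:ℝ)..s, (N:ℝ) * τ ^ (N - 1) * w τ ^ γ) ^ ((N:ℝ)⁻¹) ≤ M ^ (γ / N) := by
    intro s hs
    have := Real.rpow_le_rpow (Inn_nonneg hw0 hs) (Inn_le hN hγ hwc hw0 hM0 hM hs)
      (by positivity : (0:ℝ) ≤ (N:ℝ)⁻¹)
    rwa [← Real.rpow_mul hM0, ← div_eq_mul_inv] at this
  constructor
  · exact intervalIntegral.integral_nonneg ht.2
      (fun u hu => hFnn u ⟨le_trans ht.1 hu.1, hu.2⟩)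
  · have h1 : MAop N γ w t ≤ ∫ s in t..(1:ℝ), M ^ (γ / N) := by
      refine intervalIntegral.integral_mono_on ht.2
        (ii_sub (F_cont hγ hwc) ht.1 ht.2 le_rfl)
        (intervalIntegrable_const) (fun x hx => hFle x ⟨le_trans ht.1 hx.1, hx.2⟩)
    rw [intervalIntegral.integral_const, smul_eq_mul] at h1
    have h2 : (0:ℝ) ≤ M ^ (γ / N) := Real.rpow_nonneg hM0 _
    nlinarith [ht.1, ht.2]

/-- Lower bound for the operator. -/
private lemma MAop_lower (hN : 1 ≤ N) (hγ : 0 < γ) (hwc : ContinuousOn w (Icc 0 1))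
    (hw0 : ∀ t ∈ Icc (0:ℝ) 1, 0 ≤ w t) {c : ℝ} (hc0 : 0 ≤ c)
    (hc : ∀ τ ∈ Icc (1/4:ℝ) (3/4), c ≤ w τ) :
    ∀ t ∈ Icc (0:ℝ) (3/4:ℝ), (1/16) * c ^ (γ / N) ≤ MAop N γ w t := by
  intro t ht
  have hN0 : (N:ℝ) ≠ 0 := Nat.cast_ne_zero.mpr (by omega)
  have hgi : ∀ a b : ℝ, 0 ≤ a → a ≤ b → b ≤ 1 →
      IntervalIntegrable (fun τ : ℝ => (N:ℝ) * τ ^ (N - 1) * w τ ^ γ)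
        MeasureTheory.volume a b := fun a b ha hab hb => ii_sub (g_cont hγ hwc) ha hab hb
  -- key pointwise bound for the outer integrand on [3/4, 1]
  have key : ∀ s ∈ Icc (3/4:ℝ) 1,
      (1/4:ℝ) * c ^ (γ / N)
        ≤ (∫ τ in (0:ℝ)..s, (N:ℝ) * τ ^ (N - 1) * w τ ^ γ) ^ ((N:ℝ)⁻¹) := by
    intro s hs
    have hs1 : s ≤ 1 := hs.2
    have hs34 : (3/4:ℝ) ≤ s := hs.1
    -- split the inner integral
    have hsplit : (∫ τ in (0:ℝ)..s, (N:ℝ) * τ ^ (N - 1) * w τ ^ γ)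
        = (∫ τ in (0:ℝ)..(1/4:ℝ), (N:ℝ) * τ ^ (N - 1) * w τ ^ γ)
          + (∫ τ in (1/4:ℝ)..(1/2:ℝ), (N:ℝ) * τ ^ (N - 1) * w τ ^ γ)
          + (∫ τ in (1/2:ℝ)..s, (N:ℝ) * τ ^ (N - 1) * w τ ^ γ) := by
      rw [intervalIntegral.integral_add_adjacent_intervals
        (hgi 0 (1/4) (by norm_num) (by norm_num) (by norm_num))
        (hgi (1/4) (1/2) (by norm_num) (by norm_num) (by norm_num)),
        intervalIntegral.integral_add_adjacent_intervals
        (hgi 0 (1/2) (by norm_num) (by norm_num) (by norm_num))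
        (hgi (1/2) s (by norm_num) (by linarith) hs1)]
    have h1 : 0 ≤ ∫ τ in (0:ℝ)..(1/4:ℝ), (N:ℝ) * τ ^ (N - 1) * w τ ^ γ :=
      intervalIntegral.integral_nonneg (by norm_num)
        (fun u hu => g_nonneg hw0 ⟨hu.1, by linarith [hu.2]⟩)
    have h3 : 0 ≤ ∫ τ in (1/2:ℝ)..s, (N:ℝ) * τ ^ (N - 1) * w τ ^ γ :=
      intervalIntegral.integral_nonneg (by linarith)
        (fun u hu => g_nonneg hw0 ⟨by linarith [hu.1], le_trans hu.2 hs1⟩)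
    have h2 : c ^ γ * ((1/2:ℝ) ^ N - (1/4:ℝ) ^ N)
        ≤ ∫ τ in (1/4:ℝ)..(1/2:ℝ), (N:ℝ) * τ ^ (N - 1) * w τ ^ γ := by
      have hpt : ∀ x ∈ Icc (1/4:ℝ) (1/2:ℝ),
          (N:ℝ) * x ^ (N - 1) * c ^ γ ≤ (N:ℝ) * x ^ (N - 1) * w x ^ γ := by
        intro x hx
        have hx14 : x ∈ Icc (1/4:ℝ) (3/4) := ⟨hx.1, by linarith [hx.2]⟩
        have hcw : c ^ γ ≤ w x ^ γ := Real.rpow_le_rpow hc0 (hc x hx14) hγ.le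
        have h3 : (0:ℝ) ≤ (N:ℝ) * x ^ (N - 1) := by
          have : (0:ℝ) ≤ x := by linarith [hx.1]
          positivity
        exact mul_le_mul_of_nonneg_left hcw h3
      have hmono := intervalIntegral.integral_mono_on (by norm_num : (1/4:ℝ) ≤ 1/2)
        ((by fun_prop : Continuous (fun τ : ℝ => (N:ℝ) * τ ^ (N - 1) * c ^ γ)).intervalIntegrable _ _)
        (hgi (1/4) (1/2) (by norm_num) (by norm_num) (by norm_num)) hpt
      rwa [int_pow_mul hN] at hmono
    -- (1/2)^N - (1/4)^N ≥ (1/4)^N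
    have hpow : (1/4:ℝ) ^ N ≤ (1/2:ℝ) ^ N - (1/4:ℝ) ^ N := by
      have e1 : (1/4:ℝ) ^ N = (1/2:ℝ) ^ N * (1/2:ℝ) ^ N := by
        rw [← mul_pow]; norm_num
      have e2 : (1/2:ℝ) ^ N ≤ (1/2:ℝ) ^ 1 :=
        pow_le_pow_of_le_one (by norm_num) (by norm_num) hN
      have e3 : (0:ℝ) ≤ (1/2:ℝ) ^ N := by positivity
      nlinarith
    have hcγ : (0:ℝ) ≤ c ^ γ := Real.rpow_nonneg hc0 γ
    have hlow : c ^ γ * (1/4:ℝ) ^ N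
        ≤ ∫ τ in (0:ℝ)..s, (N:ℝ) * τ ^ (N - 1) * w τ ^ γ := by
      rw [hsplit]
      nlinarith
    have hrw : (c ^ γ * (1/4:ℝ) ^ N) ^ ((N:ℝ)⁻¹) = c ^ (γ / N) * (1/4:ℝ) := by
      rw [Real.mul_rpow hcγ (by positivity), ← Real.rpow_mul hc0,
        ← Real.rpow_natCast (1/4:ℝ) N, ← Real.rpow_mul (by norm_num : (0:ℝ) ≤ 1/4),
        mul_inv_cancel₀ hN0, Real.rpow_one, ← div_eq_mul_inv]
    calc (1/4:ℝ) * c ^ (γ / N) = (c ^ γ * (1/4:ℝ) ^ N) ^ ((N:ℝ)⁻¹) := by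
          rw [hrw]; ring
      _ ≤ (∫ τ in (0:ℝ)..s, (N:ℝ) * τ ^ (N - 1) * w τ ^ γ) ^ ((N:ℝ)⁻¹) :=
          Real.rpow_le_rpow (by positivity) hlow (by positivity)
  -- now bound the outer integral
  have hFi : ∀ a b : ℝ, 0 ≤ a → a ≤ b → b ≤ 1 →
      IntervalIntegrable
        (fun s : ℝ => (∫ τ in (0:ℝ)..s, (N:ℝ) * τ ^ (N - 1) * w τ ^ γ) ^ ((N:ℝ)⁻¹))
        MeasureTheory.volume a b := fun a b ha hab hb => ii_sub (F_cont hγ hwc) ha hab hb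
  have hsplit2 : MAop N γ w t
      = (∫ s in t..(3/4:ℝ),
          (∫ τ in (0:ℝ)..s, (N:ℝ) * τ ^ (N - 1) * w τ ^ γ) ^ ((N:ℝ)⁻¹))
        + ∫ s in (3/4:ℝ)..(1:ℝ),
          (∫ τ in (0:ℝ)..s, (N:ℝ) * τ ^ (N - 1) * w τ ^ γ) ^ ((N:ℝ)⁻¹) := by
    rw [MAop, intervalIntegral.integral_add_adjacent_intervals
      (hFi t (3/4) ht.1 ht.2 (by norm_num))
      (hFi (3/4) 1 (by norm_num) (by norm_num) le_rfl)]
  have hp1 : 0 ≤ ∫ s in t..(3/4:ℝ),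
      (∫ τ in (0:ℝ)..s, (N:ℝ) * τ ^ (N - 1) * w τ ^ γ) ^ ((N:ℝ)⁻¹) :=
    intervalIntegral.integral_nonneg ht.2
      (fun u hu => Real.rpow_nonneg
        (Inn_nonneg hw0 ⟨le_trans ht.1 hu.1, by linarith [hu.2]⟩) _)
  have hp2 : (1/4:ℝ) * ((1/4:ℝ) * c ^ (γ / N))
      ≤ ∫ s in (3/4:ℝ)..(1:ℝ),
        (∫ τ in (0:ℝ)..s, (N:ℝ) * τ ^ (N - 1) * w τ ^ γ) ^ ((N:ℝ)⁻¹) := by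
    have := intervalIntegral.integral_mono_on (by norm_num : (3/4:ℝ) ≤ 1)
      (intervalIntegrable_const)
      (hFi (3/4) 1 (by norm_num) (by norm_num) le_rfl)
      (fun x hx => key x hx)
    rw [intervalIntegral.integral_const, smul_eq_mul] at this
    calc (1/4:ℝ) * ((1/4:ℝ) * c ^ (γ / N))
        = (1 - 3/4) * ((1/4:ℝ) * c ^ (γ / N)) := by ring
      _ ≤ _ := this
  rw [hsplit2]
  have hcp : (0:ℝ) ≤ c ^ (γ / N) := Real.rpow_nonneg hc0 _
  nlinarith

end Aux

theorem stmt8 (N : ℕ) (hN : 2 ≤ N) (α β : ℝ) (hα : 0 < α) (hβ : 0 < β)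
    (hαβ : (N:ℝ) ^ 2 < α * β) :
    (∃ Γ₁ > (0:ℝ),
      (∀ v : ℝ → ℝ, memK v →
        Γ₁ * supNorm v ^ (α * β / (N:ℝ) ^ 2) ≤ supNorm (MAop N α (MAop N β v)) ∧
        supNorm (MAop N α (MAop N β v)) ≤ supNorm v ^ (α * β / (N:ℝ) ^ 2))) ∧
    (∀ r₁ : ℝ, 0 < r₁ → r₁ < 1 → ∀ v : ℝ → ℝ, memK v → supNorm v = r₁ →
      supNorm (MAop N α (MAop N β v)) < supNorm v) ∧
    (∃ R : ℝ, ∀ r₂ : ℝ, R < r₂ → ∀ v : ℝ → ℝ, memK v → supNorm v = r₂ →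
      supNorm v < supNorm (MAop N α (MAop N β v))) := by
  have hN1 : 1 ≤ N := by omega
  have hN0 : (N:ℝ) ≠ 0 := Nat.cast_ne_zero.mpr (by omega)
  have hNpos : (0:ℝ) < (N:ℝ) := by positivity
  have hN2pos : (0:ℝ) < (N:ℝ) ^ 2 := by positivity
  set p : ℝ := α * β / (N:ℝ) ^ 2 with hp_def
  have hp1 : 1 < p := (one_lt_div hN2pos).mpr hαβ
  set Γ₁ : ℝ := (1/16) * (1/16:ℝ) ^ (α / N) * (1/4:ℝ) ^ p with hΓ_def
  have hΓpos : 0 < Γ₁ := by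
    have h1 : (0:ℝ) < (1/16:ℝ) ^ (α / N) := Real.rpow_pos_of_pos (by norm_num) _
    have h2 : (0:ℝ) < (1/4:ℝ) ^ p := Real.rpow_pos_of_pos (by norm_num) _
    positivity
  -- the main two-sided estimate
  have main : ∀ v : ℝ → ℝ, memK v →
      Γ₁ * supNorm v ^ p ≤ supNorm (MAop N α (MAop N β v)) ∧
      supNorm (MAop N α (MAop N β v)) ≤ supNorm v ^ p := by
    intro v hv
    obtain ⟨hvc, hv0, hv14⟩ := hv
    set m := supNorm v with hm_def
    have hbdd : BddAbove ((fun t => |v t|) '' Icc (0:ℝ) 1) :=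
      (isCompact_Icc.image_of_continuousOn hvc.abs).bddAbove
    have hvm : ∀ t ∈ Icc (0:ℝ) 1, v t ≤ m := by
      intro t ht
      have := le_csSup hbdd ⟨t, ht, rfl⟩
      calc v t ≤ |v t| := le_abs_self _
        _ ≤ m := this
    have hm0 : 0 ≤ m := by
      have h0 : (0:ℝ) ∈ Icc (0:ℝ) 1 := by norm_num
      have := le_csSup hbdd ⟨0, h0, rfl⟩
      exact le_trans (abs_nonneg _) this
    -- the inner operator
    set w := MAop N β v with hw_def
    have hw_bounds := MAop_upper hN1 hβ hvc hv0 hm0 hvm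
    have hwc : ContinuousOn w (Icc (0:ℝ) 1) := MAop_cont hβ hvc
    have hw0 : ∀ t ∈ Icc (0:ℝ) 1, 0 ≤ w t := fun t ht => (hw_bounds t ht).1
    have hwM : ∀ t ∈ Icc (0:ℝ) 1, w t ≤ m ^ (β / N) := fun t ht => (hw_bounds t ht).2
    have hmβ0 : 0 ≤ m ^ (β / N) := Real.rpow_nonneg hm0 _
    have hw_low : ∀ t ∈ Icc (0:ℝ) (3/4:ℝ),
        (1/16) * (m/4) ^ (β / N) ≤ w t := by
      have hc : ∀ τ ∈ Icc (1/4:ℝ) (3/4), m/4 ≤ v τ := by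
        intro τ hτ
        have := hv14 τ hτ
        linarith
      exact MAop_lower hN1 hβ hvc hv0 (by linarith) hc
    -- the outer operator
    have hT_bounds := MAop_upper hN1 hα hwc hw0 hmβ0 hwM
    have hT_low := MAop_lower hN1 hα hwc hw0
      (c := (1/16) * (m/4) ^ (β / N))
      (by positivity)
      (fun τ hτ => hw_low τ ⟨by linarith [hτ.1], hτ.2⟩)
    -- exponent arithmetic
    have hexp : (m ^ (β / N)) ^ (α / N) = m ^ p := by
      rw [← Real.rpow_mul hm0]
      congr 1
      rw [hp_def]
      field_simp
    have hTvb : ∀ t ∈ Icc (0:ℝ) 1,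
        |MAop N α w t| ≤ m ^ p := by
      intro t ht
      rw [abs_of_nonneg (hT_bounds t ht).1, ← hexp]
      exact (hT_bounds t ht).2
    have hbddT : BddAbove ((fun t => |MAop N α w t|) '' Icc (0:ℝ) 1) := by
      refine ⟨m ^ p, ?_⟩
      rintro x ⟨t, ht, rfl⟩
      exact hTvb t ht
    constructor
    · -- lower bound
      have h0mem : (0:ℝ) ∈ Icc (0:ℝ) (3/4:ℝ) := by norm_num
      have hlow0 := hT_low 0 h0mem
      have hle : MAop N α w 0 ≤ supNorm (MAop N α w) := by
        have := le_csSup hbddT ⟨0, by norm_num, rfl⟩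
        exact le_trans (le_abs_self _) this
      refine le_trans ?_ (le_trans hlow0 hle)
      -- Γ₁ * m ^ p ≤ (1/16) * ((1/16) * (m/4) ^ (β/N)) ^ (α/N)
      have harith : (1/16:ℝ) * ((1/16) * (m/4) ^ (β / N)) ^ (α / N) = Γ₁ * m ^ p := by
        have h4 : (m/4:ℝ) = m * (1/4) := by ring
        rw [h4, Real.mul_rpow hm0 (by norm_num),
          Real.mul_rpow (by norm_num) (by positivity),
          Real.mul_rpow (Real.rpow_nonneg hm0 _) (Real.rpow_nonneg (by norm_num) _),
          ← Real.rpow_mul hm0, ← Real.rpow_mul (by norm_num : (0:ℝ) ≤ 1/4)]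
        have he : β / N * (α / N) = p := by
          rw [hp_def]; field_simp
        rw [he, hΓ_def]
        ring
      rw [← harith]
    · -- upper bound
      refine Real.sSup_le ?_ (Real.rpow_nonneg hm0 _)
      rintro x ⟨t, ht, rfl⟩
      exact hTvb t ht
  refine ⟨⟨Γ₁, hΓpos, main⟩, ?_, ?_⟩
  · -- small r₁
    intro r₁ hr₁0 hr₁1 v hv hvr
    have h := (main v hv).2
    rw [hvr] at h ⊢
    calc supNorm (MAop N α (MAop N β v)) ≤ r₁ ^ p := h
      _ < r₁ ^ (1:ℝ) := Real.rpow_lt_rpow_of_exponent_gt hr₁0 hr₁1 hp1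
      _ = r₁ := Real.rpow_one _
  · -- large r₂
    refine ⟨max 1 ((Γ₁⁻¹) ^ ((p - 1)⁻¹)), fun r hr v hv hvr => ?_⟩
    have hr1 : (1:ℝ) < r := lt_of_le_of_lt (le_max_left _ _) hr
    have hr0 : (0:ℝ) < r := by linarith
    have hΓinv0 : (0:ℝ) ≤ Γ₁⁻¹ := by positivity
    have hp1' : (0:ℝ) < p - 1 := by linarith
    have hkey : Γ₁⁻¹ < r ^ (p - 1) := by
      have h1 : (Γ₁⁻¹) ^ ((p - 1)⁻¹) < r := lt_of_le_of_lt (le_max_right _ _) hr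
      have h2 := Real.rpow_lt_rpow (Real.rpow_nonneg hΓinv0 _) h1 hp1'
      rwa [← Real.rpow_mul hΓinv0, inv_mul_cancel₀ (ne_of_gt hp1'), Real.rpow_one] at h2
    have hmain := (main v hv).1
    rw [hvr] at hmain
    have hrp : r ^ p = r ^ (p - 1) * r := by
      rw [← Real.rpow_add_one (ne_of_gt hr0) (p - 1)]
      norm_num
    have : r < Γ₁ * r ^ p := by
      rw [hrp]
      have h3 : Γ₁ * Γ₁⁻¹ = 1 := mul_inv_cancel₀ (ne_of_gt hΓpos)
      nlinarith [mul_lt_mul_of_pos_left hkey hΓpos]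
    calc supNorm v = r := hvr
      _ < Γ₁ * r ^ p := this
      _ ≤ supNorm (MAop N α (MAop N β v)) := hmain
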